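/- Let δ > 0, a ∈ ℝ, and let A, Q : [0, T] → ℝ be differentiable with Q(t) > 0, satisfying A' + 2A² = -a and Q' = 2AQ + δ²/(2Q) on [0, T]. Then for every t ∈ [0, T] with a + 2A(t)² ≠ 0, Q(t)² = ((a + 2A(0)²)·Q(0)² - δ²·(A(t) - A(0))) / (a + 2A(t)²), i.e., Q(t) = (((a + 2A(0)²)Q(0)² - δ²(A(t) - A(0)))/(a + 2A(t)²))^{1/2}. -/

import Mathlib

/-- If `A, Q` are differentiable on `[0, T]` with `Q > 0`, satisfying the Riccati
equation `A' + 2A² = -a` and the Bernoulli equation `Q' = 2AQ + δ²/(2Q)` on `[0, T]`,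
then for every `t ∈ [0, T]` with `a + 2A(t)² ≠ 0`,
`Q(t)² = ((a + 2A(0)²)Q(0)² - δ²(A(t) - A(0))) / (a + 2A(t)²)`, i.e.
`Q(t) = (((a + 2A(0)²)Q(0)² - δ²(A(t) - A(0)))/(a + 2A(t)²))^{1/2}`. -/
theorem semiaxis_maximum_formula
    (δ a T : ℝ) (hδ : 0 < δ)
    (A Q : ℝ → ℝ)
    (hQpos : ∀ t ∈ Set.Icc (0 : ℝ) T, 0 < Q t)
    (hA : ∀ t ∈ Set.Icc (0 : ℝ) T, HasDerivAt A (-a - 2 * (A t) ^ 2) t)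
    (hQ : ∀ t ∈ Set.Icc (0 : ℝ) T,
      HasDerivAt Q (2 * A t * Q t + δ ^ 2 / (2 * Q t)) t) :
    ∀ t ∈ Set.Icc (0 : ℝ) T, a + 2 * (A t) ^ 2 ≠ 0 →
      (Q t) ^ 2 = ((a + 2 * (A 0) ^ 2) * (Q 0) ^ 2 - δ ^ 2 * (A t - A 0)) /
          (a + 2 * (A t) ^ 2) ∧
      Q t = Real.sqrt (((a + 2 * (A 0) ^ 2) * (Q 0) ^ 2 - δ ^ 2 * (A t - A 0)) /
          (a + 2 * (A t) ^ 2)) := by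
  set F : ℝ → ℝ := fun t => (a + 2 * (A t) ^ 2) * (Q t) ^ 2 + δ ^ 2 * A t with hF
  have hFderiv : ∀ t ∈ Set.Icc (0 : ℝ) T, HasDerivAt F 0 t := by
    intro t ht
    have hAt := hA t ht
    have hQt := hQ t ht
    have hQne : Q t ≠ 0 := (hQpos t ht).ne'
    have h : HasDerivAt F
        ((0 + 2 * ((-a - 2 * (A t) ^ 2) * (A t) + A t * (-a - 2 * (A t) ^ 2))) * (Q t) ^ 2
          + (a + 2 * (A t) ^ 2) *
            ((2 * A t * Q t + δ ^ 2 / (2 * Q t)) * Q t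
              + Q t * (2 * A t * Q t + δ ^ 2 / (2 * Q t)))
          + δ ^ 2 * (-a - 2 * (A t) ^ 2)) t := by
      have h1 : HasDerivAt (fun t => a + 2 * (A t) ^ 2)
          (0 + 2 * ((-a - 2 * (A t) ^ 2) * (A t) + A t * (-a - 2 * (A t) ^ 2))) t := by
        simpa [pow_two] using
          (hasDerivAt_const t a).fun_add (((hAt.fun_mul hAt)).const_mul 2)
      have h2 : HasDerivAt (fun t => (Q t) ^ 2)
          ((2 * A t * Q t + δ ^ 2 / (2 * Q t)) * Q t
            + Q t * (2 * A t * Q t + δ ^ 2 / (2 * Q t))) t := by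
        simpa [pow_two] using hQt.fun_mul hQt
      exact (h1.mul h2).add (hAt.const_mul (δ ^ 2))
    convert h using 1
    field_simp
    ring
  have hFcont : ContinuousOn F (Set.Icc 0 T) := fun t ht =>
    ((hFderiv t ht).continuousAt).continuousWithinAt
  have hconst : ∀ t ∈ Set.Icc (0 : ℝ) T, F t = F 0 :=
    constant_of_has_deriv_right_zero hFcont fun x hx =>
      ((hFderiv x (Set.mem_Icc_of_Ico hx)).hasDerivWithinAt)
  intro t ht hne
  have hEq := hconst t ht
  simp only [hF] at hEq
  have hsq : (Q t) ^ 2 = ((a + 2 * (A 0) ^ 2) * (Q 0) ^ 2 - δ ^ 2 * (A t - A 0)) /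
      (a + 2 * (A t) ^ 2) := by
    field_simp
    linarith
  refine ⟨hsq, ?_⟩
  rw [← hsq, Real.sqrt_sq (hQpos t ht).le]
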